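/- For discrete random variables on a finite space, suppose the joint pmf factorizes as f(y,ā,x̄) = f(y|ā,x̄) · ∏_τ [f(x_τ|ā_{τ-1},x̄_{τ-1}) · f(a_τ|ā_{τ-1},x̄_τ)] with all propensity scores positive. Then summing the inverse-propensity-weighted joint pmf over covariate histories, Σ_{x̄} f(y,ā,x̄) / ∏_τ f(a_τ|ā_{τ-1},x̄_τ), recovers the g-formula counterfactual pmf Σ_{x̄} f(y|ā,x̄) · ∏_τ f(x_τ|ā_{τ-1},x̄_{τ-1}). -/

import Mathlib

/-- **g-formula (Lemma 1, finite discrete version).**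
For finite outcome and covariate-history spaces, if the joint pmf factorizes
according to the causal DAG with strictly positive propensity scores, then the
inverse-propensity-weighted sum of the joint pmf over covariate histories
recovers the g-formula counterfactual pmf. -/
theorem g_formula_iptw_discrete
    {Y H : Type*} [Fintype Y] [Fintype H] (d : ℕ)
    (joint : Y → H → ℝ) (cond : Y → H → ℝ)
    (cov : Fin d → H → ℝ) (prop : Fin d → H → ℝ)
    (hpos : ∀ τ x, 0 < prop τ x)
    (hfact : ∀ y x,
      joint y x = cond y x * ∏ τ : Fin d, (cov τ x * prop τ x)) :
    ∀ y : Y,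
      ∑ x : H, joint y x / ∏ τ : Fin d, prop τ x
        = ∑ x : H, cond y x * ∏ τ : Fin d, cov τ x := by
  intro y
  refine Finset.sum_congr rfl fun x _ => ?_
  have hne : (∏ τ : Fin d, prop τ x) ≠ 0 :=
    (Finset.prod_pos fun τ _ => hpos τ x).ne'
  rw [hfact, Finset.prod_mul_distrib]
  field_simp
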